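/- The generating function for partitions that are simultaneously s-regular and t-distinct is ∏_{k≥1} (1-q^{sk})(1-q^{tk}) / ((1-q^k)(1-q^{stk})), i.e., the number of such partitions of n equals the coefficient of q^n in this product. -/

import Mathlib

/-- A partition is `m`-regular if no part is divisible by `m`. -/
def Nat.Partition.IsRegular {n : ℕ} (m : ℕ) (P : n.Partition) : Prop :=
  ∀ a ∈ P.parts, ¬ m ∣ a

/-- A partition is `m`-distinct if every part appears fewer than `m` times. -/
def Nat.Partition.IsDistinct {n : ℕ} (m : ℕ) (P : n.Partition) : Prop :=
  ∀ a, P.parts.count a < m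

/-- A partition is `m`-flat if consecutive parts differ by less than `m` and the
smallest part is less than `m`; equivalently, every part is either less than `m`
or within less than `m` of some strictly smaller part. -/
def Nat.Partition.IsFlat {n : ℕ} (m : ℕ) (P : n.Partition) : Prop :=
  ∀ a ∈ P.parts, a < m ∨ ∃ b ∈ P.parts, b < a ∧ a - b < m

open PowerSeries Finset
open scoped Classical

namespace RegDist

noncomputable section

variable {α : Type*}

/-- A convenience constructor for the power series whose coefficients indicate a subset. -/
def indicatorSeries (α : Type*) [Semiring α] (s : Set ℕ) : PowerSeries α :=
  PowerSeries.mk fun n => if n ∈ s then 1 else 0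

theorem coeff_indicator (s : Set ℕ) [Semiring α] (n : ℕ) :
    coeff (R := α) n (indicatorSeries _ s) = if n ∈ s then 1 else 0 :=
  coeff_mk _ _

theorem constantCoeff_indicator (s : Set ℕ) [Semiring α] :
    constantCoeff (R := α) (indicatorSeries _ s) = if 0 ∈ s then 1 else 0 :=
  rfl

theorem num_series' [Field α] (i : ℕ) :
    (1 - (X : PowerSeries α) ^ (i + 1))⁻¹ = indicatorSeries α {k | i + 1 ∣ k} := by
  rw [PowerSeries.inv_eq_iff_mul_eq_one]
  · ext n
    cases n with
    | zero => simp [mul_sub, zero_pow, constantCoeff_indicator]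
    | succ n =>
      simp only [coeff_one, if_false, mul_sub, mul_one, coeff_indicator,
        LinearMap.map_sub, reduceCtorEq]
      simp_rw [coeff_mul, coeff_X_pow, coeff_indicator, @boole_mul _ _ _ _]
      erw [@sum_ite _ _ _ _ _ (fun _ => Classical.propDecidable _), sum_ite]
      simp_rw [@filter_filter _ _ _ _ _, sum_const_zero, add_zero, sum_const, nsmul_eq_mul, mul_one,
        sub_eq_iff_eq_add, zero_add]
      symm
      split_ifs with h
      · suffices #{a ∈ antidiagonal (n + 1) | i + 1 ∣ a.fst ∧ a.snd = i + 1} = 1 by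
          simp only [Set.mem_setOf_eq]; convert congr_arg ((↑) : ℕ → α) this; norm_cast
        rw [card_eq_one]
        cases' h with p hp
        refine ⟨((i + 1) * (p - 1), i + 1), ?_⟩
        ext ⟨a₁, a₂⟩
        simp only [mem_filter, Prod.mk.injEq, Finset.HasAntidiagonal.mem_antidiagonal, mem_singleton]
        constructor
        · rintro ⟨a_left, ⟨a, rfl⟩, rfl⟩
          refine ⟨?_, rfl⟩
          rw [Nat.mul_sub_left_distrib, ← hp, ← a_left, mul_one, Nat.add_sub_cancel]
        · rintro ⟨rfl, rfl⟩
          match p with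
          | 0 => rw [mul_zero] at hp; cases hp
          | p + 1 => rw [hp]; simp [mul_add]
      · suffices #{a ∈ antidiagonal (n + 1) | i + 1 ∣ a.fst ∧ a.snd = i + 1} = 0 by
          simp only [Set.mem_setOf_eq]; convert congr_arg ((↑) : ℕ → α) this; norm_cast
        rw [card_eq_zero]
        apply eq_empty_of_forall_notMem
        simp only [Prod.forall, mem_filter, not_and, Finset.HasAntidiagonal.mem_antidiagonal]
        rintro _ h₁ h₂ ⟨a, rfl⟩ rfl
        apply h
        simp [← h₂]
  · simp [zero_pow]

-- The main workhorse.
theorem partialGF_prop (α : Type*) [CommSemiring α] (n : ℕ) (s : Finset ℕ) (hs : ∀ i ∈ s, 0 < i)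
    (c : ℕ → Set ℕ) (hc : ∀ i, i ∉ s → 0 ∈ c i) :
    #{p : n.Partition | (∀ j, p.parts.count j ∈ c j) ∧ ∀ j ∈ p.parts, j ∈ s} =
      coeff (R := α) n (∏ i ∈ s, indicatorSeries α ((· * i) '' c i)) := by
  simp_rw [coeff_prod, coeff_indicator, prod_boole, sum_boole]
  apply congr_arg
  simp only [mem_univ, forall_true_left, not_and, not_forall, exists_prop,
    Set.mem_image, not_exists]
  set φ : (a : Nat.Partition n) →
    a ∈ filter (fun p ↦ (∀ (j : ℕ), Multiset.count j p.parts ∈ c j) ∧ ∀ j ∈ p.parts, j ∈ s) univ →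
    ℕ →₀ ℕ := fun p _ => {
      toFun := fun i => Multiset.count i p.parts • i
      support := Finset.filter (fun i => i ≠ 0) p.parts.toFinset
      mem_support_toFun := fun a => by
        simp only [smul_eq_mul, ne_eq, mul_eq_zero, Multiset.count_eq_zero]
        rw [not_or, not_not]
        simp only [Multiset.mem_toFinset, not_not, mem_filter] }
  refine Finset.card_bij φ ?_ ?_ ?_
  · intro a ha
    simp only [φ, not_forall, not_exists, not_and, exists_prop, mem_filter]
    rw [mem_finsuppAntidiag]
    dsimp only [ne_eq, smul_eq_mul, id_eq, eq_mpr_eq_cast, le_eq_subset, Finsupp.coe_mk]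
    simp only [mem_univ, forall_true_left, not_and, not_forall, exists_prop,
      mem_filter, true_and] at ha
    refine ⟨⟨?_, fun i ↦ ?_⟩, fun i _ ↦ ⟨a.parts.count i, ha.1 i, rfl⟩⟩
    · conv_rhs => simp [← a.parts_sum]
      rw [sum_multiset_count_of_subset _ s]
      · simp only [smul_eq_mul]
      · intro i
        simp only [Multiset.mem_toFinset, not_not, mem_filter]
        apply ha.2
    · simp only [ne_eq, Multiset.mem_toFinset, not_not, mem_filter, and_imp]
      exact fun hi _ ↦ ha.2 i hi
  · intro p₁ hp₁ p₂ hp₂ h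
    apply Nat.Partition.ext
    simp only [true_and, mem_univ, mem_filter] at hp₁ hp₂
    ext i
    simp only [φ, ne_eq, Multiset.mem_toFinset, not_not, smul_eq_mul, Finsupp.mk.injEq] at h
    by_cases hi : i = 0
    · rw [hi]
      rw [Multiset.count_eq_zero_of_notMem]
      · rw [Multiset.count_eq_zero_of_notMem]
        intro a; exact Nat.lt_irrefl 0 (hs 0 (hp₂.2 0 a))
      intro a; exact Nat.lt_irrefl 0 (hs 0 (hp₁.2 0 a))
    · rw [← mul_left_inj' hi]
      rw [funext_iff] at h
      exact h.2 i
  · simp only [φ, mem_filter, mem_finsuppAntidiag, mem_univ, exists_prop, true_and, and_assoc]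
    rintro f ⟨hf, hf₃, hf₄⟩
    have hf' : f ∈ finsuppAntidiag s n := mem_finsuppAntidiag.mpr ⟨hf, hf₃⟩
    simp only [mem_finsuppAntidiag] at hf'
    refine ⟨⟨∑ i ∈ s, Multiset.replicate (f i / i) i, ?_, ?_⟩, ?_, ?_, ?_⟩
    · intro i hi
      simp only [exists_prop, Multiset.mem_sum, mem_map, Function.Embedding.coeFn_mk] at hi
      rcases hi with ⟨t, ht, z⟩
      apply hs
      rwa [Multiset.eq_of_mem_replicate z]
    · simp_rw [Multiset.sum_sum, Multiset.sum_replicate, Nat.nsmul_eq_mul]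
      rw [← hf'.1]
      refine sum_congr rfl fun i hi => Nat.div_mul_cancel ?_
      rcases hf₄ i hi with ⟨w, _, hw₂⟩
      rw [← hw₂]
      exact dvd_mul_left _ _
    · intro i
      simp_rw [Multiset.count_sum', Multiset.count_replicate, sum_ite_eq']
      split_ifs with h
      · rcases hf₄ i h with ⟨w, hw₁, hw₂⟩
        rwa [← hw₂, Nat.mul_div_cancel _ (hs i h)]
      · exact hc _ h
    · intro i hi
      rw [Multiset.mem_sum] at hi
      rcases hi with ⟨j, hj₁, hj₂⟩
      rwa [Multiset.eq_of_mem_replicate hj₂]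
    · ext i
      simp_rw [Multiset.count_sum', Multiset.count_replicate, sum_ite_eq']
      simp only [ne_eq, Multiset.mem_toFinset, not_not, smul_eq_mul, ite_mul,
        zero_mul, Finsupp.coe_mk]
      split_ifs with h
      · apply Nat.div_mul_cancel
        rcases hf₄ i h with ⟨w, _, hw₂⟩
        apply Dvd.intro_left _ hw₂
      · apply symm
        rw [← Finsupp.notMem_support_iff]
        exact notMem_mono hf'.2 h


section Field
variable [Field α]

lemma constCoeff_one_sub_ne {m : ℕ} (hm : m ≠ 0) :
    constantCoeff (R := α) (1 - X ^ m) ≠ 0 := by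
  simp [zero_pow hm]

lemma one_sub_mul_inv {m : ℕ} (hm : m ≠ 0) :
    (1 - X ^ m : PowerSeries α) * (1 - X ^ m)⁻¹ = 1 :=
  PowerSeries.mul_inv_cancel _ (constCoeff_one_sub_ne hm)

/-- The unit `1 - X^m` (junk value `1` for `m = 0`). -/
def U (α : Type*) [Field α] (m : ℕ) : (PowerSeries α)ˣ :=
  if h : m = 0 then 1 else Units.mkOfMulEqOne _ _ (one_sub_mul_inv (α := α) h)

lemma U_val {m : ℕ} (hm : m ≠ 0) : ((U α m : (PowerSeries α)ˣ) : PowerSeries α) = 1 - X ^ m := by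
  rw [U, dif_neg hm, Units.val_mkOfMulEqOne]

lemma U_inv_val {m : ℕ} (hm : m ≠ 0) :
    (((U α m)⁻¹ : (PowerSeries α)ˣ) : PowerSeries α) = (1 - X ^ m)⁻¹ := by
  rw [U, dif_neg hm]; rfl

lemma indicator_geom {t k : ℕ} (hk : k ≠ 0) :
    indicatorSeries α ((· * k) '' Set.Iio t) = ∑ j ∈ range t, (X : PowerSeries α) ^ (j * k) := by
  ext m
  rw [coeff_indicator, map_sum]
  simp_rw [coeff_X_pow]
  by_cases h : ∃ j, j < t ∧ j * k = m
  · obtain ⟨j₀, hj₀, rfl⟩ := h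
    rw [if_pos ⟨j₀, hj₀, rfl⟩, Finset.sum_eq_single j₀]
    · simp
    · intro j hj hne
      rw [if_neg]
      intro hjk
      exact hne (Nat.eq_of_mul_eq_mul_right (Nat.pos_of_ne_zero hk) hjk.symm)
    · intro hj; exact absurd (mem_range.2 hj₀) hj
  · rw [if_neg, Finset.sum_eq_zero]
    · intro j hj
      rw [if_neg]
      intro hjk
      exact h ⟨j, mem_range.1 hj, hjk.symm⟩
    · rintro ⟨j, hj, rfl⟩
      exact h ⟨j, hj, rfl⟩

lemma indicator_eq_frac {t k : ℕ} (hk : k ≠ 0) :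
    indicatorSeries α ((· * k) '' Set.Iio t) =
      (1 - (X : PowerSeries α) ^ (t * k)) * (1 - X ^ k)⁻¹ := by
  have hg : (∑ j ∈ range t, (X : PowerSeries α) ^ (j * k)) * (1 - X ^ k) = 1 - X ^ (t * k) := by
    have := geom_sum_mul ((X : PowerSeries α) ^ k) t
    have hrw : ∑ j ∈ range t, (X : PowerSeries α) ^ (j * k) =
        ∑ i ∈ range t, ((X : PowerSeries α) ^ k) ^ i := by
      refine Finset.sum_congr rfl fun i _ => ?_
      rw [← pow_mul, mul_comm]
    rw [hrw]
    calc (∑ i ∈ range t, ((X : PowerSeries α) ^ k) ^ i) * (1 - X ^ k)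
        = -((∑ i ∈ range t, ((X : PowerSeries α) ^ k) ^ i) * (X ^ k - 1)) := by ring
      _ = -(((X : PowerSeries α) ^ k) ^ t - 1) := by rw [this]
      _ = 1 - X ^ (t * k) := by rw [← pow_mul, mul_comm]; ring
  rw [indicator_geom hk]
  calc (∑ j ∈ range t, (X : PowerSeries α) ^ (j * k))
      = (∑ j ∈ range t, (X : PowerSeries α) ^ (j * k)) * ((1 - X ^ k) * (1 - X ^ k)⁻¹) := by
        rw [one_sub_mul_inv hk, mul_one]
    _ = (1 - (X : PowerSeries α) ^ (t * k)) * (1 - X ^ k)⁻¹ := by rw [← mul_assoc, hg]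

end Field

/-- The key multiplicative rearrangement, in an arbitrary commutative group. -/
lemma group_rearrange {G : Type*} [CommGroup G] (u : ℕ → G) (s t n : ℕ) (hs : 0 < s) :
    ∏ k ∈ Icc 1 n, u (s * k) * u (t * k) * (u k * u (s * t * k))⁻¹ =
      (∏ k ∈ (Icc 1 n).filter (fun k => ¬ s ∣ k), u (t * k) * (u k)⁻¹) *
        ∏ k ∈ Ioc (n / s) n, u (s * k) * (u (s * t * k))⁻¹ := by
  have hIcc : Icc 1 n = Ioc 0 n := Finset.Icc_add_one_left_eq_Ioc 0 n
  have h1 : ∏ k ∈ Icc 1 n, u (s * k) * u (t * k) * (u k * u (s * t * k))⁻¹ =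
      (∏ k ∈ Icc 1 n, u (t * k) * (u k)⁻¹) * ∏ k ∈ Icc 1 n, u (s * k) * (u (s * t * k))⁻¹ := by
    rw [← Finset.prod_mul_distrib]
    refine Finset.prod_congr rfl fun k _ => ?_
    rw [mul_inv]
    simp [mul_comm, mul_assoc, mul_left_comm]
  have h2 : (Icc 1 n).filter (fun k => s ∣ k) = (Icc 1 (n / s)).image (fun j => s * j) := by
    ext k
    simp only [mem_filter, mem_Icc, mem_image]
    constructor
    · rintro ⟨⟨hk1, hkn⟩, j, rfl⟩
      refine ⟨j, ⟨?_, ?_⟩, rfl⟩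
      · by_contra hj
        simp only [not_le, Nat.lt_one_iff] at hj
        subst hj; simp at hk1
      · rw [Nat.le_div_iff_mul_le hs, mul_comm]; exact hkn
    · rintro ⟨j, ⟨hj1, hj2⟩, rfl⟩
      exact ⟨⟨Nat.one_le_iff_ne_zero.2 (by positivity), by
        rw [Nat.le_div_iff_mul_le hs] at hj2; rw [mul_comm]; exact hj2⟩, ⟨j, rfl⟩⟩
  have hinj : Set.InjOn (fun j => s * j) (Icc 1 (n / s)) :=
    fun a _ b _ h => Nat.eq_of_mul_eq_mul_left hs h
  have h3 : ∏ k ∈ Icc 1 n, u (t * k) * (u k)⁻¹ =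
      ((∏ k ∈ (Icc 1 n).filter (fun k => ¬ s ∣ k), u (t * k) * (u k)⁻¹) *
        ∏ j ∈ Icc 1 (n / s), u (t * (s * j)) * (u (s * j))⁻¹) := by
    rw [← Finset.prod_filter_mul_prod_filter_not (Icc 1 n) (fun k => s ∣ k), h2,
      Finset.prod_image hinj, mul_comm]
  have h4 : ∏ k ∈ Icc 1 n, u (s * k) * (u (s * t * k))⁻¹ =
      (∏ j ∈ Icc 1 (n / s), u (s * j) * (u (s * t * j))⁻¹) *
        ∏ k ∈ Ioc (n / s) n, u (s * k) * (u (s * t * k))⁻¹ := by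
    rw [hIcc, (by rw [← Finset.Icc_add_one_left_eq_Ioc]; rfl : Icc 1 (n / s) = Ioc 0 (n / s)), ← Finset.prod_Ioc_consecutive _ (Nat.zero_le (n / s))
      (Nat.div_le_self n s)]
  have h5 : (∏ j ∈ Icc 1 (n / s), u (t * (s * j)) * (u (s * j))⁻¹) *
      ∏ j ∈ Icc 1 (n / s), u (s * j) * (u (s * t * j))⁻¹ = 1 := by
    rw [← Finset.prod_mul_distrib]
    refine Finset.prod_eq_one fun j _ => ?_
    have : t * (s * j) = s * t * j := by ring
    rw [this]
    simp [mul_comm, mul_assoc, mul_left_comm]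
  calc ∏ k ∈ Icc 1 n, u (s * k) * u (t * k) * (u k * u (s * t * k))⁻¹
      = (∏ k ∈ Icc 1 n, u (t * k) * (u k)⁻¹) * ∏ k ∈ Icc 1 n, u (s * k) * (u (s * t * k))⁻¹ := h1
    _ = ((∏ k ∈ (Icc 1 n).filter (fun k => ¬ s ∣ k), u (t * k) * (u k)⁻¹) *
          ∏ j ∈ Icc 1 (n / s), u (t * (s * j)) * (u (s * j))⁻¹) *
        ((∏ j ∈ Icc 1 (n / s), u (s * j) * (u (s * t * j))⁻¹) *
          ∏ k ∈ Ioc (n / s) n, u (s * k) * (u (s * t * k))⁻¹) := by rw [h3, h4]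
    _ = (∏ k ∈ (Icc 1 n).filter (fun k => ¬ s ∣ k), u (t * k) * (u k)⁻¹) *
        (((∏ j ∈ Icc 1 (n / s), u (t * (s * j)) * (u (s * j))⁻¹) *
          ∏ j ∈ Icc 1 (n / s), u (s * j) * (u (s * t * j))⁻¹) *
          ∏ k ∈ Ioc (n / s) n, u (s * k) * (u (s * t * k))⁻¹) := by
        simp [mul_assoc, mul_left_comm, mul_comm]
    _ = _ := by rw [h5, one_mul]

lemma coeff_eq_of_dvd {α : Type*} [CommRing α] {n : ℕ} {f g : PowerSeries α}
    (h : (X : PowerSeries α) ^ (n + 1) ∣ f - g) : coeff (R := α) n f = coeff (R := α) n g := by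
  have := (PowerSeries.X_pow_dvd_iff.1 h) n (Nat.lt_succ_self n)
  rw [map_sub, sub_eq_zero] at this
  exact this

end
end RegDist
theorem regular_distinct_genfun (s t : ℕ) (hs : 2 ≤ s) (ht : 2 ≤ t) (n : ℕ) :
    (Nat.card {P : n.Partition // P.IsRegular s ∧ P.IsDistinct t} : ℚ) =
      PowerSeries.coeff (R := ℚ) n
        (∏ k ∈ Finset.Icc 1 n,
          (1 - (X : PowerSeries ℚ) ^ (s * k)) * (1 - (X : PowerSeries ℚ) ^ (t * k)) *
            ((1 - (X : PowerSeries ℚ) ^ k) * (1 - (X : PowerSeries ℚ) ^ (s * t * k)))⁻¹) := by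
  classical
  open Finset RegDist in
  have hs' : 0 < s := by omega
  have ht' : 0 < t := by omega
  set S : Finset ℕ := (Finset.Icc 1 n).filter (fun k => ¬ s ∣ k) with hS
  set T : Finset ℕ := Finset.Ioc (n / s) n with hT
  -- Step 1: rewrite the product as the value of a product of units
  have step1 : (∏ k ∈ Finset.Icc 1 n,
      (1 - (X : PowerSeries ℚ) ^ (s * k)) * (1 - (X : PowerSeries ℚ) ^ (t * k)) *
        ((1 - (X : PowerSeries ℚ) ^ k) * (1 - (X : PowerSeries ℚ) ^ (s * t * k)))⁻¹) =
      ((∏ k ∈ Finset.Icc 1 n,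
        U ℚ (s * k) * U ℚ (t * k) * (U ℚ k * U ℚ (s * t * k))⁻¹ : (PowerSeries ℚ)ˣ) :
          PowerSeries ℚ) := by
    rw [← Units.coeHom_apply, map_prod]
    refine Finset.prod_congr rfl fun k hk => ?_
    have hk0 : k ≠ 0 := by
      have := (Finset.mem_Icc.1 hk).1; omega
    have hsk : s * k ≠ 0 := by positivity
    have htk : t * k ≠ 0 := by positivity
    have hstk : s * t * k ≠ 0 := by positivity
    rw [Units.coeHom_apply, mul_inv, Units.val_mul, Units.val_mul, Units.val_mul,
      U_val hsk, U_val htk, U_inv_val hk0, U_inv_val hstk, PowerSeries.mul_inv_rev]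
    ring
  -- Step 2: the units rearrangement
  have step2 := group_rearrange (U ℚ) s t n hs'
  -- Step 3: value of the S-product
  have step3 : ((∏ k ∈ S, U ℚ (t * k) * (U ℚ k)⁻¹ : (PowerSeries ℚ)ˣ) : PowerSeries ℚ) =
      ∏ k ∈ S, indicatorSeries ℚ ((· * k) '' Set.Iio t) := by
    rw [← Units.coeHom_apply, map_prod]
    refine Finset.prod_congr rfl fun k hk => ?_
    have hk0 : k ≠ 0 := by
      have := (Finset.mem_Icc.1 (Finset.mem_filter.1 hk).1).1; omega
    rw [Units.coeHom_apply, Units.val_mul, U_val (by positivity : t * k ≠ 0), U_inv_val hk0,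
      indicator_eq_frac hk0]
  -- Step 4/5: the T-product is 1 + O(X^(n+1))
  have step5 : (X : PowerSeries ℚ) ^ (n + 1) ∣
      ((∏ k ∈ T, U ℚ (s * k) * (U ℚ (s * t * k))⁻¹ : (PowerSeries ℚ)ˣ) : PowerSeries ℚ) - 1 := by
    rw [← Units.coeHom_apply, map_prod]
    refine Finset.prod_induction _ (fun f => (X : PowerSeries ℚ) ^ (n + 1) ∣ f - 1)
      (fun a b ha hb => ?_) (by simp) (fun k hk => ?_)
    · show (X : PowerSeries ℚ) ^ (n + 1) ∣ a * b - 1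
      have hab : a * b - 1 = a * (b - 1) + (a - 1) := by ring
      rw [hab]
      exact dvd_add (hb.mul_left a) ha
    · show (X : PowerSeries ℚ) ^ (n + 1) ∣
        ((U ℚ (s * k) * (U ℚ (s * t * k))⁻¹ : (PowerSeries ℚ)ˣ) : PowerSeries ℚ) - 1
      have hk1 : n / s < k := (Finset.mem_Ioc.1 hk).1
      have hks : n + 1 ≤ s * k := by
        have h2 : n < k * s := (Nat.div_lt_iff_lt_mul hs').1 hk1
        have h3 : k * s = s * k := mul_comm _ _
        omega
      have hkst : n + 1 ≤ s * t * k := by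
        have : s * k ≤ s * t * k := by
          have : s * k * 1 ≤ s * k * t := Nat.mul_le_mul_left _ ht'
          calc s * k = s * k * 1 := by ring
            _ ≤ s * k * t := this
            _ = s * t * k := by ring
        omega
      have hstk0 : s * t * k ≠ 0 := by omega
      rw [Units.val_mul, U_val (by omega : s * k ≠ 0), U_inv_val hstk0]
      have key : (1 - (X : PowerSeries ℚ) ^ (s * k)) * (1 - X ^ (s * t * k))⁻¹ - 1 =
          ((X : PowerSeries ℚ) ^ (s * t * k) - X ^ (s * k)) * (1 - X ^ (s * t * k))⁻¹ := by
        linear_combination one_sub_mul_inv (α := ℚ) hstk0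
      rw [key]
      exact (dvd_sub (pow_dvd_pow X hkst) (pow_dvd_pow X hks)).mul_right _
  -- Step 6: combine on the power series side
  have step6 : PowerSeries.coeff (R := ℚ) n (∏ k ∈ Finset.Icc 1 n,
      (1 - (X : PowerSeries ℚ) ^ (s * k)) * (1 - (X : PowerSeries ℚ) ^ (t * k)) *
        ((1 - (X : PowerSeries ℚ) ^ k) * (1 - (X : PowerSeries ℚ) ^ (s * t * k)))⁻¹) =
      PowerSeries.coeff (R := ℚ) n (∏ k ∈ S, indicatorSeries ℚ ((· * k) '' Set.Iio t)) := by
    rw [step1, step2, Units.val_mul, step3]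
    set A := ∏ k ∈ S, indicatorSeries ℚ ((· * k) '' Set.Iio t)
    set P := ((∏ k ∈ T, U ℚ (s * k) * (U ℚ (s * t * k))⁻¹ : (PowerSeries ℚ)ˣ) : PowerSeries ℚ)
    refine coeff_eq_of_dvd ?_
    have : A * P - A = A * (P - 1) := by ring
    rw [this]
    exact step5.mul_left A
  rw [step6]
  -- Step 7: apply the partition counting lemma
  rw [← partialGF_prop ℚ n S (fun i hi => by
      have := (Finset.mem_Icc.1 (Finset.mem_filter.1 hi).1).1; omega)
    (fun _ => Set.Iio t) (fun i _ => by simpa using ht')]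
  -- Step 8: identify the two counts
  norm_cast
  rw [Nat.card_eq_fintype_card, Fintype.card_subtype]
  refine Finset.card_bij (fun p _ => p) (fun p hp => ?_) (fun _ _ _ _ h => h)
    (fun p hp => ⟨p, ?_, rfl⟩)
  · simp only [Finset.mem_filter, Finset.mem_univ, true_and] at hp ⊢
    obtain ⟨hreg, hdis⟩ := hp
    refine ⟨fun j => hdis j, fun j hj => ?_⟩
    have hj1 : 0 < j := p.parts_pos hj
    have hjn : j ≤ n := by
      simpa [p.parts_sum] using Multiset.single_le_sum (fun _ _ => Nat.zero_le _) _ hj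
    exact Finset.mem_filter.2 ⟨Finset.mem_Icc.2 ⟨hj1, hjn⟩, hreg j hj⟩
  · simp only [Finset.mem_filter, Finset.mem_univ, true_and] at hp ⊢
    obtain ⟨hcount, hmem⟩ := hp
    exact ⟨fun j hj => ((Finset.mem_filter.1 (hmem j hj)).2), fun j => hcount j⟩
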